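/- Let Σ ∈ ℝ^{p×p} be diagonal positive definite with diagonal λ₁ ≥ ... ≥ λ_p > 0, let X ∈ ℝ^{n×p} with n < p, λ ≥ 0, s > 0, and P_λ := Xᵀ(XXᵀ + nλI_n)⁻¹X. Then sup over θ* with ‖θ*‖_{Σ^{1−s}} ≤ 1 of ‖(I_p − P_λ)θ*‖²_Σ is at least λ_{n+1}^s. -/

import Mathlib

open Matrix

/-- Continuity of `mulVec`. -/
lemma cont_mulVec {a b : ℕ} (A : Matrix (Fin a) (Fin b) ℝ) : Continuous A.mulVec := by
  have := A.mulVecLin.continuous_of_finiteDimensional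
  rwa [Matrix.coe_mulVecLin] at this

/-- With Σ diagonal with decreasing positive entries, n < p, λ ≥ 0, s > 0 and
P_λ := Xᵀ(XXᵀ + nλI_n)⁻¹X, the supremum of ‖(I_p − P_λ)θ*‖²_Σ over θ* with
‖θ*‖_{Σ^{1−s}} ≤ 1 is at least λ_{n+1}^s. -/
theorem stmt14 (n p : ℕ) (hnp : n < p) (d : Fin p → ℝ)
    (hpos : ∀ i, 0 < d i) (hanti : Antitone d)
    (X : Matrix (Fin n) (Fin p) ℝ) (lam : ℝ) (hlam : 0 ≤ lam) (s : ℝ) (hs : 0 < s) :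
    d ⟨n, hnp⟩ ^ s ≤
      sSup ((fun θ : Fin p → ℝ =>
          (θ - Xᵀ *ᵥ ((X * Xᵀ + ((n : ℝ) * lam) • 1)⁻¹ *ᵥ (X *ᵥ θ))) ⬝ᵥ
            (Matrix.diagonal d *ᵥ
              (θ - Xᵀ *ᵥ ((X * Xᵀ + ((n : ℝ) * lam) • 1)⁻¹ *ᵥ (X *ᵥ θ))))) ''
        {θ : Fin p → ℝ | θ ⬝ᵥ (Matrix.diagonal (fun i => d i ^ (1 - s)) *ᵥ θ) ≤ 1}) := by
  classical
  set M : Matrix (Fin n) (Fin n) ℝ := (X * Xᵀ + ((n : ℝ) * lam) • 1)⁻¹ with hM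
  set f : (Fin p → ℝ) → ℝ := fun θ =>
      (θ - Xᵀ *ᵥ (M *ᵥ (X *ᵥ θ))) ⬝ᵥ
        (Matrix.diagonal d *ᵥ (θ - Xᵀ *ᵥ (M *ᵥ (X *ᵥ θ)))) with hf
  set S : Set (Fin p → ℝ) :=
      {θ : Fin p → ℝ | θ ⬝ᵥ (Matrix.diagonal (fun i => d i ^ (1 - s)) *ᵥ θ) ≤ 1} with hS
  have hle : n + 1 ≤ p := hnp
  -- a nonzero kernel vector of X supported on the first n+1 coordinates
  obtain ⟨v, hv0, hvker⟩ : ∃ v : Fin (n + 1) → ℝ, v ≠ 0 ∧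
      (X.submatrix id (Fin.castLE hle)) *ᵥ v = 0 := by
    have hni : ¬ Function.Injective (X.submatrix id (Fin.castLE hle)).mulVecLin := by
      intro h
      have := LinearMap.finrank_le_finrank_of_injective h
      simp [Module.finrank_fin_fun] at this
    rw [Function.not_injective_iff] at hni
    obtain ⟨a, b, hab, hne⟩ := hni
    refine ⟨a - b, sub_ne_zero_of_ne hne, ?_⟩
    have : (X.submatrix id (Fin.castLE hle)).mulVecLin (a - b) = 0 := by
      rw [map_sub, hab, sub_self]
    simpa [Matrix.mulVecLin_apply] using this
  -- extend by zero
  set θ : Fin p → ℝ := fun i => if h : (i : ℕ) < n + 1 then v ⟨i, h⟩ else 0 with hθ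
  have hθcast : ∀ k : Fin (n + 1), θ (Fin.castLE hle k) = v k := by
    intro k
    simp [hθ, Fin.castLE]
    intro h; exact absurd h (Nat.not_lt.2 (Nat.lt_succ_iff.1 k.isLt))
  have hθsupp : ∀ i : Fin p, θ i ≠ 0 → (i : ℕ) < n + 1 := by
    intro i hi
    by_contra h
    simp [hθ, h] at hi
    obtain ⟨hx, _⟩ := hi; omega
  -- X *ᵥ θ = 0
  have hXθ : X *ᵥ θ = 0 := by
    funext r
    have key : ∑ j : Fin p, X r j * θ j = ∑ k : Fin (n + 1), X r (Fin.castLE hle k) * v k := by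
      have h1 : ∑ k : Fin (n + 1), X r (Fin.castLE hle k) * v k
          = ∑ j ∈ Finset.univ.image (Fin.castLE hle), X r j * θ j := by
        rw [Finset.sum_image (fun x _ y _ h => Fin.castLE_injective hle h)]
        exact Finset.sum_congr rfl fun k _ => by rw [hθcast]
      rw [h1]
      apply (Finset.sum_subset (Finset.subset_univ _) ?_).symm
      intro j _ hj
      have : θ j = 0 := by
        by_contra h
        exact hj (Finset.mem_image.2 ⟨⟨(j : ℕ), hθsupp j h⟩, Finset.mem_univ _, by
          ext; simp⟩)
      simp [this]
    have := congrFun hvker r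
    simp only [Matrix.mulVec, dotProduct, Matrix.submatrix_apply, id] at this
    simpa [Matrix.mulVec, dotProduct, key] using this
  -- θ ≠ 0
  have hθne : θ ≠ 0 := by
    intro h
    apply hv0
    funext k
    have := congrFun h (Fin.castLE hle k)
    rw [hθcast] at this
    simpa using this
  -- rewrite the quadratic forms as sums
  have hq1 : ∀ w : Fin p → ℝ, w ⬝ᵥ (Matrix.diagonal (fun i => d i ^ (1 - s)) *ᵥ w)
      = ∑ i : Fin p, d i ^ (1 - s) * w i ^ 2 := by
    intro w
    simp [dotProduct, Matrix.mulVec_diagonal]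
    exact Finset.sum_congr rfl fun i _ => by ring
  have hq2 : ∀ w : Fin p → ℝ, w ⬝ᵥ (Matrix.diagonal d *ᵥ w)
      = ∑ i : Fin p, d i * w i ^ 2 := by
    intro w
    simp [dotProduct, Matrix.mulVec_diagonal]
    exact Finset.sum_congr rfl fun i _ => by ring
  -- normalization constant
  set c : ℝ := ∑ i : Fin p, d i ^ (1 - s) * θ i ^ 2 with hc
  have hcpos : 0 < c := by
    have hterm : ∀ i ∈ Finset.univ, 0 ≤ d i ^ (1 - s) * θ i ^ 2 := fun i _ =>
      mul_nonneg (Real.rpow_nonneg (hpos i).le _) (sq_nonneg _)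
    obtain ⟨k, hk⟩ := Function.ne_iff.1 hv0
    have hk' : θ (Fin.castLE hle k) ≠ 0 := by rw [hθcast]; simpa using hk
    refine Finset.sum_pos' hterm ⟨Fin.castLE hle k, Finset.mem_univ _, ?_⟩
    exact mul_pos (Real.rpow_pos_of_pos (hpos _) _) (by positivity)
  set θ' : Fin p → ℝ := (Real.sqrt c)⁻¹ • θ with hθ'
  have hsq : ((Real.sqrt c)⁻¹) ^ 2 = c⁻¹ := by
    rw [← Real.sqrt_inv, Real.sq_sqrt (by positivity)]
  have hsum1 : ∑ i : Fin p, d i ^ (1 - s) * θ' i ^ 2 = 1 := by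
    have : ∀ i, d i ^ (1 - s) * θ' i ^ 2 = c⁻¹ * (d i ^ (1 - s) * θ i ^ 2) := by
      intro i
      simp only [hθ', Pi.smul_apply, smul_eq_mul, mul_pow]
      rw [hsq]; ring
    rw [Finset.sum_congr rfl fun i _ => this i, ← Finset.mul_sum, ← hc,
      inv_mul_cancel₀ hcpos.ne']
  -- θ' is in the constraint set
  have hmem : θ' ∈ S := by
    show θ' ⬝ᵥ _ ≤ 1
    rw [hq1, hsum1]
  -- X *ᵥ θ' = 0, so f θ' is the Σ-norm of θ'
  have hXθ' : X *ᵥ θ' = 0 := by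
    rw [hθ', Matrix.mulVec_smul, hXθ, smul_zero]
  have hfθ' : f θ' = ∑ i : Fin p, d i * θ' i ^ 2 := by
    rw [hf]
    simp only [hXθ', Matrix.mulVec_zero, sub_zero]
    exact hq2 θ'
  -- lower bound on f θ'
  have hlow : d ⟨n, hnp⟩ ^ s ≤ f θ' := by
    rw [hfθ']
    have key : ∀ i : Fin p, d ⟨n, hnp⟩ ^ s * (d i ^ (1 - s) * θ' i ^ 2) ≤ d i * θ' i ^ 2 := by
      intro i
      by_cases h0 : θ' i = 0
      · simp [h0]
      · have hθi : θ i ≠ 0 := by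
          intro h; apply h0; simp [hθ', h]
        have hi : (i : ℕ) < n + 1 := hθsupp i hθi
        have hile : i ≤ ⟨n, hnp⟩ := by
          rw [Fin.le_def]; simpa using Nat.lt_succ_iff.1 hi
        have hd : d ⟨n, hnp⟩ ≤ d i := hanti hile
        have hrpow : d ⟨n, hnp⟩ ^ s ≤ d i ^ s :=
          Real.rpow_le_rpow (hpos _).le hd hs.le
        have : d ⟨n, hnp⟩ ^ s * d i ^ (1 - s) ≤ d i ^ s * d i ^ (1 - s) :=
          mul_le_mul_of_nonneg_right hrpow (Real.rpow_nonneg (hpos i).le _)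
        have hdi : d i ^ s * d i ^ (1 - s) = d i := by
          rw [← Real.rpow_add (hpos i)]; norm_num
        calc d ⟨n, hnp⟩ ^ s * (d i ^ (1 - s) * θ' i ^ 2)
            = (d ⟨n, hnp⟩ ^ s * d i ^ (1 - s)) * θ' i ^ 2 := by ring
          _ ≤ (d i ^ s * d i ^ (1 - s)) * θ' i ^ 2 :=
              mul_le_mul_of_nonneg_right this (sq_nonneg _)
          _ = d i * θ' i ^ 2 := by rw [hdi]
    calc d ⟨n, hnp⟩ ^ s = d ⟨n, hnp⟩ ^ s * ∑ i : Fin p, d i ^ (1 - s) * θ' i ^ 2 := by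
          rw [hsum1, mul_one]
      _ = ∑ i : Fin p, d ⟨n, hnp⟩ ^ s * (d i ^ (1 - s) * θ' i ^ 2) := by
          rw [Finset.mul_sum]
      _ ≤ ∑ i : Fin p, d i * θ' i ^ 2 := Finset.sum_le_sum fun i _ => key i
  -- the constraint set is compact, hence the image is bounded above
  have hScomp : IsCompact S := by
    have hcont : Continuous fun θ : Fin p → ℝ =>
        θ ⬝ᵥ (Matrix.diagonal (fun i => d i ^ (1 - s)) *ᵥ θ) := by
      simp only [dotProduct, Matrix.mulVec_diagonal]
      exact continuous_finset_sum _ fun i _ =>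
        (continuous_apply i).mul (continuous_const.mul (continuous_apply i))
    have hclosed : IsClosed S := isClosed_Iic.preimage hcont
    have hFinP : (0 : ℕ) < p := lt_of_le_of_lt (Nat.zero_le n) hnp
    have : Nonempty (Fin p) := ⟨⟨0, hFinP⟩⟩
    set m : ℝ := Finset.univ.inf' (Finset.univ_nonempty) (fun i => d i ^ (1 - s)) with hm
    have hmpos : 0 < m := by
      rw [hm, Finset.lt_inf'_iff]
      exact fun i _ => Real.rpow_pos_of_pos (hpos i) _
    have hbd : Bornology.IsBounded S := by
      apply Bornology.IsBounded.subset (Metric.isBounded_closedBall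
        (x := (0 : Fin p → ℝ)) (r := Real.sqrt m⁻¹))
      intro w hw
      have hw' : ∑ i : Fin p, d i ^ (1 - s) * w i ^ 2 ≤ 1 := by
        rw [← hq1]; exact hw
      rw [Metric.mem_closedBall, dist_zero_right]
      rw [pi_norm_le_iff_of_nonneg (Real.sqrt_nonneg _)]
      intro i
      rw [Real.norm_eq_abs]
      apply Real.abs_le_sqrt
      have h1 : m * w i ^ 2 ≤ d i ^ (1 - s) * w i ^ 2 :=
        mul_le_mul_of_nonneg_right (Finset.inf'_le _ (Finset.mem_univ i)) (sq_nonneg _)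
      have h2 : d i ^ (1 - s) * w i ^ 2 ≤ ∑ j : Fin p, d j ^ (1 - s) * w j ^ 2 :=
        Finset.single_le_sum (fun j _ =>
          mul_nonneg (Real.rpow_nonneg (hpos j).le _) (sq_nonneg _)) (Finset.mem_univ i)
      have : m * w i ^ 2 ≤ 1 := le_trans h1 (le_trans h2 hw')
      rw [show m⁻¹ = 1 / m by ring, le_div_iff₀ hmpos]
      nlinarith [this]
    exact Metric.isCompact_of_isClosed_isBounded hclosed hbd
  have hcontf : Continuous f := by
    have hg : Continuous fun θ : Fin p → ℝ => θ - Xᵀ *ᵥ (M *ᵥ (X *ᵥ θ)) := by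
      exact continuous_id.sub ((cont_mulVec Xᵀ).comp ((cont_mulVec M).comp (cont_mulVec X)))
    rw [hf]
    simp only [dotProduct, Matrix.mulVec_diagonal]
    exact continuous_finset_sum _ fun i _ =>
      ((continuous_apply i).comp hg).mul (continuous_const.mul ((continuous_apply i).comp hg))
  have hbdd : BddAbove (f '' S) := (hScomp.image hcontf).bddAbove
  exact le_csSup_of_le hbdd ⟨θ', hmem, rfl⟩ hlow
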